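/- arXiv:2311.09905 — 3 statements merged into one kernel-verified Lean document; each statement's English description precedes it below -/
import Mathlib

section
/- Let m divide n and let N be the n×n doubly stochastic matrix obtained by stacking n/m copies of an m×n nonnegative matrix M with constant column sums m/n and constant row sums. Then there exists a function π : [n] → [m] such that M_{π(j), j} > 0 for all j in [n] and every fiber π^{-1}(i) has exactly n/m elements. -/
lemma fiber_card_aux (m n : ℕ) (hm : 0 < m) (hdvd : m ∣ n) (i : Fin m) :
    (Finset.univ.filter fun k : Fin n => (k : ℕ) % m = (i : ℕ)).card = n / m := by
  classical
  rw [← Finset.card_fin (n / m)]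
  refine Finset.card_nbij' (fun k => (⟨(k : ℕ) / m, by
      obtain ⟨k, hk⟩ := k
      exact Nat.div_lt_div_of_lt_of_dvd hdvd hk⟩ : Fin (n / m)))
    (fun q => (⟨(q : ℕ) * m + (i : ℕ), by
      obtain ⟨q, hq⟩ := q
      calc q * m + (i : ℕ) < (q + 1) * m := by
            have := i.isLt; nlinarith
        _ ≤ (n / m) * m := Nat.mul_le_mul_right m (Nat.succ_le_of_lt hq)
        _ = n := Nat.div_mul_cancel hdvd⟩ : Fin n)) ?_ ?_ ?_ ?_
  · intro k hk
    simp
  · intro q hq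
    simp only [Finset.mem_coe, Finset.mem_filter, Finset.mem_univ, true_and, Fin.val_mk]
    rw [add_comm, Nat.add_mul_mod_self_right, Nat.mod_eq_of_lt i.isLt]
  · intro k hk
    simp only [Finset.mem_coe, Finset.mem_filter, Finset.mem_univ, true_and] at hk
    have h := Nat.div_add_mod' (k : ℕ) m
    ext
    simp only
    omega
  · intro q hq
    ext
    simp only [add_comm, Nat.add_mul_div_right _ _ hm, Nat.div_eq_of_lt i.isLt, zero_add, add_zero]

/-- If `M` is an `m × n` nonnegative matrix (with `m ∣ n`) whose columns all
sum to `m/n` and whose row sums are all equal (so that stacking `n/m` copies of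
`M` gives an `n × n` doubly stochastic matrix), then there is a function
`π : [n] → [m]` with `M (π j) j > 0` for all `j` and each fiber of `π` of
cardinality exactly `n/m`. -/
theorem stacked_matrix_balanced_selection (m n : ℕ) (hm : 0 < m) (hn : 0 < n)
    (hdvd : m ∣ n) (M : Matrix (Fin m) (Fin n) ℝ)
    (hnonneg : ∀ i j, 0 ≤ M i j)
    (hcol : ∀ j, ∑ i, M i j = (m : ℝ) / n)
    (hrow : ∃ c : ℝ, ∀ i, ∑ j, M i j = c) :
    ∃ π : Fin n → Fin m, (∀ j, 0 < M (π j) j) ∧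
      ∀ i : Fin m, (Finset.univ.filter fun j => π j = i).card = n / m := by
  classical
  obtain ⟨c, hc⟩ := hrow
  have hmR : (0:ℝ) < m := by exact_mod_cast hm
  have hnR : (0:ℝ) < n := by exact_mod_cast hn
  set res : Fin n → Fin m := fun k => ⟨(k : ℕ) % m, Nat.mod_lt _ hm⟩ with hres
  have hfib : ∀ i : Fin m,
      (Finset.univ.filter fun k : Fin n => res k = i).card = n / m := by
    intro i
    rw [← fiber_card_aux m n hm hdvd i]
    congr 1
    ext k
    simp [hres, Fin.ext_iff]
  -- the common row sum is 1
  have hc1 : c = 1 := by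
    have h1 : ∑ i : Fin m, ∑ j, M i j = (m : ℝ) := by
      rw [show ∑ i : Fin m, ∑ j, M i j = ∑ j, ∑ i : Fin m, M i j from Finset.sum_comm]
      rw [Finset.sum_congr rfl (fun j _ => hcol j), Finset.sum_const, nsmul_eq_mul,
        Finset.card_fin]
      field_simp
    rw [Finset.sum_congr rfl (fun i _ => hc i), Finset.sum_const, nsmul_eq_mul,
      Finset.card_fin] at h1
    have hmne : (m:ℝ) ≠ 0 := ne_of_gt hmR
    field_simp at h1
    tauto
  -- columns of the stacked matrix sum to 1
  have hNcol : ∀ j, ∑ k : Fin n, M (res k) j = 1 := by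
    intro j
    have hmap := Finset.sum_fiberwise_of_maps_to (g := res)
      (fun k (_ : k ∈ (Finset.univ : Finset (Fin n))) => Finset.mem_univ (res k))
      (fun k => M (res k) j)
    rw [← hmap]
    have hin : ∀ i : Fin m,
        ∑ k ∈ Finset.univ.filter (fun k => res k = i), M (res k) j
          = ((n/m : ℕ) : ℝ) * M i j := by
      intro i
      rw [Finset.sum_congr rfl (fun k hk => by rw [(Finset.mem_filter.mp hk).2]),
        Finset.sum_const, hfib i, nsmul_eq_mul]
    rw [Finset.sum_congr rfl (fun i _ => hin i), ← Finset.mul_sum, hcol,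
      Nat.cast_div hdvd (ne_of_gt hmR)]
    field_simp
  -- Hall's condition
  set t : Fin n → Finset (Fin n) :=
    fun j => Finset.univ.filter fun k => 0 < M (res k) j with ht
  have hall : ∀ s : Finset (Fin n), s.card ≤ (s.biUnion t).card := by
    intro s
    have inner : ∀ j ∈ s, ∑ k ∈ s.biUnion t, M (res k) j = 1 := by
      intro j hj
      rw [← hNcol j]
      apply Finset.sum_subset (Finset.subset_univ _)
      intro k _ hk
      by_contra hpos
      exact hk (Finset.mem_biUnion.mpr ⟨j, hj, Finset.mem_filter.mpr
        ⟨Finset.mem_univ _, lt_of_le_of_ne (hnonneg _ _) (Ne.symm hpos)⟩⟩)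
    have key : (s.card : ℝ) ≤ ((s.biUnion t).card : ℝ) := by
      have h1 : (s.card : ℝ) = ∑ k ∈ s.biUnion t, ∑ j ∈ s, M (res k) j := by
        rw [Finset.sum_comm, Finset.sum_congr rfl inner, Finset.sum_const,
          nsmul_eq_mul, mul_one]
      rw [h1]
      calc ∑ k ∈ s.biUnion t, ∑ j ∈ s, M (res k) j
          ≤ ∑ _k ∈ s.biUnion t, (1:ℝ) := by
            apply Finset.sum_le_sum
            intro k _
            calc ∑ j ∈ s, M (res k) j ≤ ∑ j, M (res k) j :=
                  Finset.sum_le_sum_of_subset_of_nonneg (Finset.subset_univ _)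
                    (fun j _ _ => hnonneg _ _)
              _ = c := hc _
              _ = 1 := hc1
        _ = ((s.biUnion t).card : ℝ) := by simp
    exact_mod_cast key
  obtain ⟨f, hfinj, hft⟩ :=
    (Finset.all_card_le_biUnion_card_iff_exists_injective t).mp hall
  have hfsurj : Function.Surjective f := Finite.surjective_of_injective hfinj
  refine ⟨res ∘ f, fun j => ?_, fun i => ?_⟩
  · have := hft j
    rw [ht, Finset.mem_filter] at this
    exact this.2
  · rw [← hfib i]
    apply Finset.card_bij (fun j _ => f j)
    · intro j hj
      simp only [Finset.mem_filter, Finset.mem_univ, true_and, Function.comp] at hj ⊢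
      exact hj
    · intro j1 _ j2 _ h
      exact hfinj h
    · intro k hk
      obtain ⟨j, rfl⟩ := hfsurj k
      simp only [Finset.mem_filter, Finset.mem_univ, true_and, Function.comp] at hk ⊢
      exact ⟨j, hk, rfl⟩
end

section
/- Let μ be a probability measure on R^d that is absolutely continuous with respect to Lebesgue measure and positive on all nonempty open sets, let x_1, ..., x_n be n distinct points in R^d, and for real weights λ_1, ..., λ_n define the power diagram cells C_j = {y ∈ R^d : dist²(y, x_j) − λ_j ≤ dist²(y, x_i) − λ_i for all i ∈ [n]}. Then there exists a unique choice of weights with Σλ_i = 0 such that μ(C_j) = 1/n for all j ∈ [n]. -/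
open MeasureTheory
open scoped ENNReal

/-- The cell of the power diagram with sites `x` and weights `lam`
associated to the site `x j`. -/
def powerCell {d n : ℕ} (x : Fin n → EuclideanSpace ℝ (Fin d))
    (lam : Fin n → ℝ) (j : Fin n) : Set (EuclideanSpace ℝ (Fin d)) :=
  {y | ∀ i, dist y (x j) ^ 2 - lam j ≤ dist y (x i) ^ 2 - lam i}

set_option linter.unusedSectionVars false
namespace AHA

variable {d n : ℕ} [NeZero n]

local notation "E" => EuclideanSpace ℝ (Fin d)

lemma hyperplane_null (v : E) (hv : v ≠ 0) (c : ℝ) :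
    volume {y : E | (inner ℝ y v : ℝ) = c} = 0 := by
  set f : E →ₗ[ℝ] ℝ := (innerSL ℝ v).toLinearMap with hf
  have hfy : ∀ y, f y = (inner ℝ y v : ℝ) := by
    intro y; simp only [hf, ContinuousLinearMap.coe_coe, innerSL_apply_apply]
    exact real_inner_comm y v
  have hfv : f v = ‖v‖^2 := by rw [hfy, real_inner_self_eq_norm_sq]
  have hn : ‖v‖^2 ≠ 0 := by
    have : ‖v‖ ≠ 0 := norm_ne_zero_iff.mpr hv
    positivity
  have hker : LinearMap.ker f ≠ ⊤ := by
    intro h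
    have : f v = 0 := by rw [LinearMap.ker_eq_top] at h; simp [h]
    exact hn (hfv ▸ this)
  set y₀ : E := (c / ‖v‖^2) • v with hy₀
  have hfy₀ : f y₀ = c := by
    rw [hy₀, LinearMap.map_smul, hfv, smul_eq_mul]
    field_simp
  have hset : {y : E | (inner ℝ y v : ℝ) = c}
      = (fun y => y + (-y₀)) ⁻¹' (LinearMap.ker f : Set E) := by
    ext y
    simp only [Set.mem_setOf_eq, Set.mem_preimage, SetLike.mem_coe, LinearMap.mem_ker, map_add,
      map_neg, hfy₀, ← hfy]
    constructor
    · intro h; rw [h]; ring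
    · intro h; linarith
  rw [hset, measure_preimage_add_right]
  exact Measure.addHaar_submodule volume _ hker

/-- the power function of site `j` -/
noncomputable def pf (x : Fin n → E) (lam : Fin n → ℝ) (j : Fin n) (y : E) : ℝ :=
  dist y (x j) ^ 2 - lam j

lemma bisector_null (a b : E) (hab : a ≠ b) (c : ℝ) :
    volume {y : E | dist y a ^ 2 - dist y b ^ 2 = c} = 0 := by
  have key : ∀ y : E, dist y a ^ 2 - dist y b ^ 2
      = 2 * inner ℝ y (b - a) + ‖a‖^2 - ‖b‖^2 := by
    intro y
    rw [dist_eq_norm, dist_eq_norm, norm_sub_sq_real, norm_sub_sq_real, inner_sub_right]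
    ring
  have : {y : E | dist y a ^ 2 - dist y b ^ 2 = c}
      = {y : E | (inner ℝ y (b - a) : ℝ) = (c - ‖a‖^2 + ‖b‖^2) / 2} := by
    ext y; simp only [Set.mem_setOf_eq, key]; constructor <;> intro h <;> linarith
  rw [this]
  exact hyperplane_null _ (sub_ne_zero.mpr (Ne.symm hab)) _

/-- the set of points equidistant (in the power sense) from two distinct sites -/
def tie (x : Fin n → E) (lam : Fin n → ℝ) : Set E :=
  ⋃ (i : Fin n) (j : Fin n) (_ : i ≠ j), {y | pf x lam i y = pf x lam j y}

lemma tie_null (μ : Measure E) (hac : μ ≪ volume) (x : Fin n → E)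
    (hx : Function.Injective x) (lam : Fin n → ℝ) : μ (tie x lam) = 0 := by
  refine measure_iUnion_null fun i => measure_iUnion_null fun j => measure_iUnion_null fun hij => ?_
  refine hac ?_
  have : {y : E | pf x lam i y = pf x lam j y}
      = {y : E | dist y (x i) ^ 2 - dist y (x j) ^ 2 = lam i - lam j} := by
    ext y; simp only [Set.mem_setOf_eq, pf]; constructor <;> intro h <;> linarith
  rw [this]
  exact bisector_null _ _ (fun h => hij (hx h)) _

lemma measurableSet_tie (x : Fin n → E) (lam : Fin n → ℝ) : MeasurableSet (tie x lam) := by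
  refine MeasurableSet.iUnion fun i => MeasurableSet.iUnion fun j =>
    MeasurableSet.iUnion fun _ => ?_
  have : IsClosed {y : E | pf x lam i y = pf x lam j y} := by
    apply isClosed_eq <;> exact (Continuous.sub ((continuous_id.dist continuous_const).pow 2)
      continuous_const)
  exact this.measurableSet

lemma isClosed_powerCell (x : Fin n → E) (lam : Fin n → ℝ) (j : Fin n) :
    IsClosed (powerCell x lam j) := by
  have : powerCell x lam j = ⋂ i, {y : E | pf x lam j y ≤ pf x lam i y} := by
    ext y; simp [powerCell, pf]
  rw [this]
  refine isClosed_iInter fun i => isClosed_le ?_ ?_ <;>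
    exact (Continuous.sub ((continuous_id.dist continuous_const).pow 2) continuous_const)

lemma mem_powerCell_iff (x : Fin n → E) (lam : Fin n → ℝ) (j : Fin n) (y : E) :
    y ∈ powerCell x lam j ↔ ∀ i, pf x lam j y ≤ pf x lam i y := Iff.rfl

lemma iUnion_powerCell (x : Fin n → E) (lam : Fin n → ℝ) (hn : 0 < n) :
    (⋃ j, powerCell x lam j) = Set.univ := by
  refine Set.eq_univ_of_forall fun y => ?_
  have hne : (Finset.univ : Finset (Fin n)).Nonempty := Finset.univ_nonempty_iff.mpr
    ⟨⟨0, hn⟩⟩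
  obtain ⟨j, -, hj⟩ := Finset.exists_min_image Finset.univ (fun i => pf x lam i y) hne
  exact Set.mem_iUnion.mpr ⟨j, fun i => hj i (Finset.mem_univ i)⟩

lemma powerCell_inter_subset_tie (x : Fin n → E) (lam : Fin n → ℝ) {i j : Fin n} (hij : i ≠ j) :
    powerCell x lam i ∩ powerCell x lam j ⊆ tie x lam := by
  rintro y ⟨hi, hj⟩
  refine Set.mem_iUnion.mpr ⟨i, Set.mem_iUnion.mpr ⟨j, Set.mem_iUnion.mpr ⟨hij, ?_⟩⟩⟩
  exact le_antisymm (hi j) (hj i)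

/-- measures of unions of cells add up -/
lemma measure_biUnion_powerCell (μ : Measure E) (hac : μ ≪ volume) (x : Fin n → E)
    (hx : Function.Injective x) (lam : Fin n → ℝ) (S : Finset (Fin n)) :
    μ (⋃ j ∈ S, powerCell x lam j) = ∑ j ∈ S, μ (powerCell x lam j) := by
  have htie := tie_null μ hac x hx lam
  have hD : ∀ j : Fin n, μ (powerCell x lam j \ tie x lam) = μ (powerCell x lam j) :=
    fun j => measure_diff_null htie
  have hdisj : (S : Set (Fin n)).PairwiseDisjoint
      (fun j => powerCell x lam j \ tie x lam) := by
    intro i _ j _ hij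
    refine Set.disjoint_left.mpr fun y hy hy' => ?_
    exact hy.2 (powerCell_inter_subset_tie x lam hij ⟨hy.1, hy'.1⟩)
  have hmeas : ∀ j : Fin n, MeasurableSet (powerCell x lam j \ tie x lam) :=
    fun j => ((isClosed_powerCell x lam j).measurableSet).diff (measurableSet_tie x lam)
  calc μ (⋃ j ∈ S, powerCell x lam j)
      = μ ((⋃ j ∈ S, powerCell x lam j \ tie x lam) ∪
          ((⋃ j ∈ S, powerCell x lam j) ∩ tie x lam)) := by
        congr 1
        ext y
        by_cases hy : y ∈ tie x lam <;> simp [hy, Set.mem_iUnion]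
    _ = μ (⋃ j ∈ S, powerCell x lam j \ tie x lam) := by
        have ht0 : μ ((⋃ j ∈ S, powerCell x lam j) ∩ tie x lam) = 0 :=
          measure_mono_null Set.inter_subset_right htie
        refine le_antisymm ?_ (measure_mono Set.subset_union_left)
        calc μ ((⋃ j ∈ S, powerCell x lam j \ tie x lam) ∪
            ((⋃ j ∈ S, powerCell x lam j) ∩ tie x lam))
            ≤ μ (⋃ j ∈ S, powerCell x lam j \ tie x lam) +
              μ ((⋃ j ∈ S, powerCell x lam j) ∩ tie x lam) := measure_union_le _ _
          _ = μ (⋃ j ∈ S, powerCell x lam j \ tie x lam) := by rw [ht0, add_zero]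
    _ = ∑ j ∈ S, μ (powerCell x lam j \ tie x lam) :=
        measure_biUnion_finset hdisj fun j _ => hmeas j
    _ = ∑ j ∈ S, μ (powerCell x lam j) := Finset.sum_congr rfl fun j _ => hD j

lemma sum_measure_powerCell (μ : Measure E) [IsProbabilityMeasure μ] (hac : μ ≪ volume)
    (x : Fin n → E) (hx : Function.Injective x) (lam : Fin n → ℝ) (hn : 0 < n) :
    ∑ j, μ (powerCell x lam j) = 1 := by
  rw [← measure_biUnion_powerCell μ hac x hx lam Finset.univ]
  simp only [Finset.mem_univ, Set.iUnion_true]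
  rw [iUnion_powerCell x lam hn, measure_univ]



lemma inf'_le_inf'_add {ι : Type*} {s : Finset ι} (h : s.Nonempty) (f g : ι → ℝ) (ε : ℝ)
    (hfg : ∀ j ∈ s, f j ≤ g j + ε) : s.inf' h f ≤ s.inf' h g + ε := by
  obtain ⟨j, hj, hjeq⟩ := Finset.exists_mem_eq_inf' h g
  calc s.inf' h f ≤ f j := Finset.inf'_le _ hj
    _ ≤ g j + ε := hfg j hj
    _ = s.inf' h g + ε := by rw [hjeq]

lemma abs_inf'_sub_inf'_le {ι : Type*} {s : Finset ι} (h : s.Nonempty) (f g : ι → ℝ) (ε : ℝ)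
    (hfg : ∀ j ∈ s, |f j - g j| ≤ ε) : |s.inf' h f - s.inf' h g| ≤ ε := by
  rw [abs_sub_le_iff]
  constructor
  · have := inf'_le_inf'_add h f g ε fun j hj => by
      have := (abs_sub_le_iff.mp (hfg j hj)).1; linarith
    linarith
  · have := inf'_le_inf'_add h g f ε fun j hj => by
      have := (abs_sub_le_iff.mp (hfg j hj)).2; linarith
    linarith

/-- the minimal power function -/
noncomputable def pmin (x : Fin n → E) (lam : Fin n → ℝ) (y : E) : ℝ :=
  Finset.univ.inf' Finset.univ_nonempty fun j => pf x lam j y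

lemma pmin_le (x : Fin n → E) (lam : Fin n → ℝ) (j : Fin n) (y : E) :
    pmin x lam y ≤ pf x lam j y := Finset.inf'_le _ (Finset.mem_univ j)

lemma exists_pmin_eq (x : Fin n → E) (lam : Fin n → ℝ) (y : E) :
    ∃ j, pmin x lam y = pf x lam j y := by
  obtain ⟨j, -, hj⟩ := Finset.exists_mem_eq_inf' (Finset.univ_nonempty) fun j => pf x lam j y
  exact ⟨j, hj⟩

lemma continuous_pf (x : Fin n → E) (lam : Fin n → ℝ) (j : Fin n) :
    Continuous (pf x lam j) :=
  Continuous.sub ((continuous_id.dist continuous_const).pow 2) continuous_const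

lemma continuous_pmin (x : Fin n → E) (lam : Fin n → ℝ) : Continuous (pmin x lam) :=
  Continuous.finset_inf'_apply _ fun j _ => continuous_pf x lam j

lemma abs_pmin_sub_pmin_le (x : Fin n → E) (lam lam' : Fin n → ℝ) (y : E) :
    |pmin x lam y - pmin x lam' y| ≤ ‖lam - lam'‖ := by
  refine abs_inf'_sub_inf'_le _ _ _ _ fun j _ => ?_
  have : pf x lam j y - pf x lam' j y = -(lam j - lam' j) := by simp only [pf]; ring
  rw [this, abs_neg]
  exact (norm_le_pi_norm (lam - lam') j)

/-- the (normalized) objective functional -/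
noncomputable def Phi (μ : Measure E) (x : Fin n → E) (lam : Fin n → ℝ) : ℝ :=
  ∫ y, (pmin x lam y - pmin x 0 y) ∂μ

lemma integrable_psi (μ : Measure E) [IsProbabilityMeasure μ] (x : Fin n → E)
    (lam : Fin n → ℝ) : Integrable (fun y => pmin x lam y - pmin x 0 y) μ := by
  refine ⟨(Continuous.sub (continuous_pmin x lam) (continuous_pmin x 0)).aestronglyMeasurable, ?_⟩
  refine HasFiniteIntegral.of_bounded (C := ‖lam‖) (Filter.Eventually.of_forall fun y => ?_)
  rw [Real.norm_eq_abs]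
  simpa using abs_pmin_sub_pmin_le x lam 0 y

lemma Phi_zero (μ : Measure E) (x : Fin n → E) : Phi μ x 0 = 0 := by
  simp [Phi]

lemma abs_Phi_sub_Phi (μ : Measure E) [IsProbabilityMeasure μ] (x : Fin n → E)
    (lam lam' : Fin n → ℝ) : |Phi μ x lam - Phi μ x lam'| ≤ ‖lam - lam'‖ := by
  have h1 := integrable_psi μ x lam
  have h2 := integrable_psi μ x lam'
  have : Phi μ x lam - Phi μ x lam' = ∫ y, (pmin x lam y - pmin x lam' y) ∂μ := by
    rw [Phi, Phi, ← integral_sub h1 h2]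
    congr 1; ext y; ring
  rw [this, ← Real.norm_eq_abs]
  calc ‖∫ y, (pmin x lam y - pmin x lam' y) ∂μ‖ ≤ ‖lam - lam'‖ * (μ Set.univ).toReal := by
        refine norm_integral_le_of_norm_le_const (Filter.Eventually.of_forall fun y => ?_)
        rw [Real.norm_eq_abs]; exact abs_pmin_sub_pmin_le x lam lam' y
    _ = ‖lam - lam'‖ := by simp

lemma continuous_Phi (μ : Measure E) [IsProbabilityMeasure μ] (x : Fin n → E) :
    Continuous (Phi μ x) := by
  rw [Metric.continuous_iff]
  intro lam ε hε
  refine ⟨ε, hε, fun lam' h => ?_⟩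
  calc dist (Phi μ x lam') (Phi μ x lam) = |Phi μ x lam' - Phi μ x lam| := Real.dist_eq _ _
    _ ≤ ‖lam' - lam‖ := abs_Phi_sub_Phi μ x lam' lam
    _ = dist lam' lam := (dist_eq_norm _ _).symm
    _ < ε := h


lemma sup'_lam_nonneg (lam : Fin n → ℝ) (hsum : ∑ i, lam i = 0) :
    0 ≤ Finset.univ.sup' Finset.univ_nonempty lam := by
  by_contra h
  push_neg at h
  have hlt : ∀ j : Fin n, lam j < 0 := fun j =>
    lt_of_le_of_lt (Finset.le_sup' lam (Finset.mem_univ j)) h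
  have : ∑ i, lam i < 0 := Finset.sum_neg (fun i _ => hlt i) Finset.univ_nonempty
  linarith [hsum ▸ this]

lemma neg_lam_le (lam : Fin n → ℝ) (hsum : ∑ i, lam i = 0) (j : Fin n) :
    -lam j ≤ (n : ℝ) * Finset.univ.sup' Finset.univ_nonempty lam := by
  set M := Finset.univ.sup' Finset.univ_nonempty lam with hM
  have hM0 : 0 ≤ M := sup'_lam_nonneg lam hsum
  have hsplit : lam j + ∑ i ∈ Finset.univ.erase j, lam i = 0 := by
    rw [Finset.add_sum_erase _ lam (Finset.mem_univ j)]; exact hsum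
  have hbound : ∑ i ∈ Finset.univ.erase j, lam i ≤ ((Finset.univ.erase j).card : ℝ) * M := by
    calc ∑ i ∈ Finset.univ.erase j, lam i ≤ (Finset.univ.erase j).card • M :=
          Finset.sum_le_card_nsmul _ _ _ fun i _ => Finset.le_sup' lam (Finset.mem_univ i)
      _ = ((Finset.univ.erase j).card : ℝ) * M := by rw [nsmul_eq_mul]
  have hcard : ((Finset.univ.erase j).card : ℝ) ≤ (n : ℝ) := by
    have : (Finset.univ.erase j).card ≤ n := by
      simpa using Finset.card_erase_le.trans (by simp)
    exact_mod_cast this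
  nlinarith [mul_le_mul_of_nonneg_right hcard hM0]

lemma norm_lam_le (lam : Fin n → ℝ) (hsum : ∑ i, lam i = 0) :
    ‖lam‖ ≤ (n : ℝ) * Finset.univ.sup' Finset.univ_nonempty lam := by
  set M := Finset.univ.sup' Finset.univ_nonempty lam with hM
  have hM0 : 0 ≤ M := sup'_lam_nonneg lam hsum
  have hn1 : (1 : ℝ) ≤ (n : ℝ) := by
    have := Fin.pos_iff_nonempty.mpr (inferInstance : Nonempty (Fin n))
    exact_mod_cast this
  refine (pi_norm_le_iff_of_nonneg (by nlinarith)).mpr fun j => ?_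
  rw [Real.norm_eq_abs, abs_le]
  constructor
  · linarith [neg_lam_le lam hsum j]
  · calc lam j ≤ M := Finset.le_sup' lam (Finset.mem_univ j)
      _ ≤ (n:ℝ) * M := by nlinarith

lemma coercive (μ : Measure E) [IsProbabilityMeasure μ] (x : Fin n → E) (hn2 : 2 ≤ n) :
    ∃ G : ℝ, 0 ≤ G ∧ ∀ lam : Fin n → ℝ, (∑ i, lam i = 0) →
      Phi μ x lam ≤ G - (Finset.univ.sup' Finset.univ_nonempty lam) / 2 := by
  have hnR : (2 : ℝ) ≤ (n : ℝ) := by exact_mod_cast hn2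
  -- a compact set capturing most of the mass
  have hU : MeasurableSet (Set.univ : Set E) := MeasurableSet.univ
  have hε0 : ((4 * n : ℕ) : ℝ≥0∞)⁻¹ ≠ 0 := by
    simp only [ne_eq, ENNReal.inv_eq_zero]
    exact ENNReal.natCast_ne_top _
  obtain ⟨K, -, hK, hKd⟩ := hU.exists_isCompact_diff_lt (μ := μ) (by simp) hε0
  have hKc : μ Kᶜ ≤ ((4 * n : ℕ) : ℝ≥0∞)⁻¹ := by
    refine le_of_lt ?_
    simpa [Set.compl_eq_univ_diff] using hKd
  set b := (μ Kᶜ).toReal with hbdef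
  set a := (μ K).toReal with hadef
  have hb0 : 0 ≤ b := ENNReal.toReal_nonneg
  have ha0 : 0 ≤ a := ENNReal.toReal_nonneg
  have hb : b * (4 * n : ℝ) ≤ 1 := by
    have h1 : (μ Kᶜ).toReal ≤ (((4 * n : ℕ) : ℝ≥0∞)⁻¹).toReal :=
      ENNReal.toReal_mono (by simp; omega) hKc
    have h2 : (((4 * n : ℕ) : ℝ≥0∞)⁻¹).toReal = ((4 * n : ℕ) : ℝ)⁻¹ := by
      rw [ENNReal.toReal_inv]; simp
    rw [h2] at h1
    have hpos : (0:ℝ) < (4 * n : ℕ) := by positivity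
    rw [inv_eq_one_div] at h1
    rw [← hbdef] at h1
    calc b * (4 * n : ℝ) ≤ (1 / ((4 * n : ℕ) : ℝ)) * (4 * n : ℝ) := by
          apply mul_le_mul_of_nonneg_right h1 (by positivity)
      _ = 1 := by field_simp; simp
  have hab : a + b = 1 := by
    have h := measure_add_measure_compl (μ := μ) hK.measurableSet
    have hfin1 : μ K ≠ ⊤ := measure_ne_top μ K
    have hfin2 : μ Kᶜ ≠ ⊤ := measure_ne_top μ Kᶜ
    have : (μ K + μ Kᶜ).toReal = (1 : ℝ≥0∞).toReal := by rw [h]; simp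
    rwa [ENNReal.toReal_add hfin1 hfin2, ENNReal.toReal_one] at this
  have hKne : K.Nonempty := by
    rcases K.eq_empty_or_nonempty with h | h
    · exfalso
      have : b = 1 := by
        rw [hbdef, h]; simp
      rw [this] at hb; nlinarith
    · exact h
  -- bound of the reference excess function on K
  set g : E → ℝ := fun y =>
    (Finset.univ.sup' Finset.univ_nonempty fun j => pf x 0 j y) - pmin x 0 y with hgdef
  have hgcont : Continuous g := by
    exact (Continuous.finset_sup'_apply _ fun j _ => continuous_pf x 0 j).sub (continuous_pmin x 0)
  obtain ⟨z, -, hzG⟩ := hK.exists_isMaxOn hKne hgcont.continuousOn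
  refine ⟨max (g z) 0, le_max_right _ _, fun lam hsum => ?_⟩
  set M := Finset.univ.sup' Finset.univ_nonempty lam with hMdef
  have hM0 : 0 ≤ M := sup'_lam_nonneg lam hsum
  obtain ⟨jM, -, hjM⟩ := Finset.exists_mem_eq_sup' Finset.univ_nonempty lam
  -- global bound on the integrand
  have hglobal : ∀ y : E, pmin x lam y - pmin x 0 y ≤ (n : ℝ) * M := by
    intro y
    obtain ⟨j₀, hj₀⟩ := exists_pmin_eq x 0 y
    have h1 : pmin x lam y ≤ pf x lam j₀ y := pmin_le x lam j₀ y
    have h2 : pf x lam j₀ y = pf x 0 j₀ y - lam j₀ := by simp [pf]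
    have h3 : -lam j₀ ≤ (n : ℝ) * M := neg_lam_le lam hsum j₀
    rw [hj₀]; linarith
  -- bound on K
  have hKbound : ∀ y ∈ K, pmin x lam y - pmin x 0 y ≤ g z - M := by
    intro y hy
    have h1 : pmin x lam y ≤ pf x lam jM y := pmin_le x lam jM y
    have h2 : pf x lam jM y = pf x 0 jM y - M := by simp [pf, ← hjM, hMdef]
    have h3 : pf x 0 jM y ≤ Finset.univ.sup' Finset.univ_nonempty fun j => pf x 0 j y :=
      Finset.le_sup' (fun j => pf x 0 j y) (Finset.mem_univ jM)
    have h4 : g y ≤ g z := hzG hy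
    rw [hgdef] at h4
    have h5 : (Finset.univ.sup' Finset.univ_nonempty fun j => pf x 0 j z) - pmin x 0 z = g z :=
      rfl
    simp only at h4
    rw [h5] at h4
    linarith
  -- split the integral
  have hint := integrable_psi μ x lam
  have hsplit : Phi μ x lam = (∫ y in K, (pmin x lam y - pmin x 0 y) ∂μ)
      + ∫ y in Kᶜ, (pmin x lam y - pmin x 0 y) ∂μ :=
    (integral_add_compl hK.measurableSet hint).symm
  have hIK : (∫ y in K, (pmin x lam y - pmin x 0 y) ∂μ) ≤ a * (g z - M) := by
    calc (∫ y in K, (pmin x lam y - pmin x 0 y) ∂μ)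
        ≤ ∫ _ in K, (g z - M) ∂μ := by
          refine setIntegral_mono_on hint.integrableOn ((integrableOn_const_iff (C := g z - M)).mpr
            (Or.inr (measure_lt_top μ K))) hK.measurableSet hKbound
      _ = a * (g z - M) := by rw [setIntegral_const]; simp [hadef, smul_eq_mul, Measure.real]
  have hIKc : (∫ y in Kᶜ, (pmin x lam y - pmin x 0 y) ∂μ) ≤ b * ((n : ℝ) * M) := by
    calc (∫ y in Kᶜ, (pmin x lam y - pmin x 0 y) ∂μ)
        ≤ ∫ _ in Kᶜ, ((n : ℝ) * M) ∂μ := by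
          refine setIntegral_mono_on hint.integrableOn ((integrableOn_const_iff (C := (n : ℝ) * M)).mpr
            (Or.inr (measure_lt_top μ Kᶜ))) hK.measurableSet.compl
            (fun y _ => hglobal y)
      _ = b * ((n : ℝ) * M) := by rw [setIntegral_const]; simp [hbdef, smul_eq_mul, Measure.real]
  have ha1 : a ≤ 1 := by linarith
  have hgz : g z ≤ max (g z) 0 := le_max_left _ _
  have hmax0 : (0:ℝ) ≤ max (g z) 0 := le_max_right _ _
  have haG : a * g z ≤ max (g z) 0 := by
    rcases le_or_gt (g z) 0 with h | h
    · calc a * g z ≤ 0 := mul_nonpos_of_nonneg_of_nonpos ha0 h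
        _ ≤ _ := hmax0
    · calc a * g z ≤ 1 * g z := mul_le_mul_of_nonneg_right ha1 h.le
        _ = g z := one_mul _
        _ ≤ _ := hgz
  -- combine
  rw [hsplit]
  have hcoef : b * (n:ℝ) * M + b * M - M ≤ - M / 2 := by
    have h1 : b * (n:ℝ) + b ≤ 1/2 := by nlinarith
    nlinarith
  nlinarith [hIK, hIKc, hcoef, haG]

lemma exists_maximizer (μ : Measure E) [IsProbabilityMeasure μ] (x : Fin n → E) (hn2 : 2 ≤ n) :
    ∃ lam : Fin n → ℝ, (∑ i, lam i = 0) ∧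
      ∀ lam' : Fin n → ℝ, (∑ i, lam' i = 0) → Phi μ x lam' ≤ Phi μ x lam := by
  obtain ⟨G, hG0, hG⟩ := coercive μ x hn2
  set S := {lam : Fin n → ℝ | (∑ i, lam i = 0) ∧ 0 ≤ Phi μ x lam} with hSdef
  have h0S : (0 : Fin n → ℝ) ∈ S := ⟨by simp, by rw [Phi_zero]⟩
  have hclosed : IsClosed S := by
    have h1 : IsClosed {lam : Fin n → ℝ | ∑ i, lam i = 0} :=
      isClosed_eq (continuous_finset_sum _ fun i _ => continuous_apply i) continuous_const
    have h2 : IsClosed {lam : Fin n → ℝ | 0 ≤ Phi μ x lam} :=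
      isClosed_le continuous_const (continuous_Phi μ x)
    exact h1.inter h2
  have hbounded : Bornology.IsBounded S := by
    refine isBounded_iff_forall_norm_le.mpr ⟨(n : ℝ) * (2 * G), fun lam hlam => ?_⟩
    obtain ⟨hsum, hphi⟩ := hlam
    have hcoer := hG lam hsum
    have hM : Finset.univ.sup' Finset.univ_nonempty lam ≤ 2 * G := by linarith
    have hM0 : 0 ≤ Finset.univ.sup' Finset.univ_nonempty lam := sup'_lam_nonneg lam hsum
    have hnn : (0:ℝ) ≤ (n:ℝ) := Nat.cast_nonneg n
    calc ‖lam‖ ≤ (n : ℝ) * Finset.univ.sup' Finset.univ_nonempty lam := norm_lam_le lam hsum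
      _ ≤ (n : ℝ) * (2 * G) := mul_le_mul_of_nonneg_left hM hnn
  obtain ⟨lamS, hlamS, hmax⟩ := (Metric.isCompact_of_isClosed_isBounded hclosed
    hbounded).exists_isMaxOn ⟨0, h0S⟩ (continuous_Phi μ x).continuousOn
  refine ⟨lamS, hlamS.1, fun lam' h' => ?_⟩
  by_cases h0 : 0 ≤ Phi μ x lam'
  · exact hmax ⟨h', h0⟩
  · push_neg at h0
    have h00 : Phi μ x 0 ≤ Phi μ x lamS := hmax h0S
    rw [Phi_zero] at h00
    linarith

lemma pmin_eq_of_le (x : Fin n → E) (lam : Fin n → ℝ) (j : Fin n) (y : E)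
    (h : ∀ i, pf x lam j y ≤ pf x lam i y) : pmin x lam y = pf x lam j y :=
  le_antisymm (pmin_le x lam j y) (Finset.le_inf' _ _ fun i _ => h i)

lemma measure_cells_eq_of_max (μ : Measure E) [IsProbabilityMeasure μ] (hac : μ ≪ volume)
    (x : Fin n → E) (hx : Function.Injective x) (lam : Fin n → ℝ) (hsum : ∑ i, lam i = 0)
    (hmax : ∀ lam' : Fin n → ℝ, (∑ i, lam' i = 0) → Phi μ x lam' ≤ Phi μ x lam) (j : Fin n) :
    μ (powerCell x lam j) = (n : ℝ≥0∞)⁻¹ := by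
  classical
  set c : Fin n → ℝ := fun i => (μ (powerCell x lam i)).toReal with hcdef
  -- Step 1: first-order inequality
  have key : ∀ v : Fin n → ℝ, (∑ i, v i = 0) → 0 ≤ ∑ i, v i * c i := by
    intro v hv
    set t : ℕ → ℝ := fun k => 1 / ((k : ℝ) + 1) with htdef
    have ht_pos : ∀ k, 0 < t k := fun k => by positivity
    have ht_lim : Filter.Tendsto t Filter.atTop (nhds 0) :=
      tendsto_one_div_add_atTop_nhds_zero_nat
    set F : ℕ → E → ℝ := fun k y => (pmin x (lam + t k • v) y - pmin x lam y) / t k with hFdef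
    have hFmeas : ∀ k, AEStronglyMeasurable (F k) μ := fun k =>
      (((continuous_pmin x _).sub (continuous_pmin x lam)).div_const _).aestronglyMeasurable
    have hFbound : ∀ k, ∀ᵐ y ∂μ, ‖F k y‖ ≤ ‖v‖ := by
      intro k
      refine Filter.Eventually.of_forall fun y => ?_
      have h1 : |pmin x (lam + t k • v) y - pmin x lam y| ≤ ‖t k • v‖ := by
        have := abs_pmin_sub_pmin_le x (lam + t k • v) lam y
        simpa using this
      have h2 : ‖t k • v‖ = t k * ‖v‖ := by
        rw [norm_smul, Real.norm_eq_abs, abs_of_pos (ht_pos k)]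
      rw [Real.norm_eq_abs, hFdef]
      simp only [abs_div, abs_of_pos (ht_pos k)]
      rw [div_le_iff₀ (ht_pos k)]
      rw [h2] at h1
      linarith [h1]
    set L : E → ℝ := fun y =>
      ∑ i, Set.indicator (powerCell x lam i \ tie x lam) (fun _ => -v i) y with hLdef
    have hae : ∀ᵐ y ∂μ, Filter.Tendsto (fun k => F k y) Filter.atTop (nhds (L y)) := by
      filter_upwards [measure_eq_zero_iff_ae_notMem.mp (tie_null μ hac x hx lam)] with y hy
      obtain ⟨j₀, hj₀⟩ := exists_pmin_eq x lam y
      have hstrict : ∀ i, i ≠ j₀ → pf x lam j₀ y < pf x lam i y := by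
        intro i hi
        rcases lt_or_eq_of_le (hj₀.symm.trans_le (pmin_le x lam i y)) with h | h
        · exact h
        · exact absurd (Set.mem_iUnion.mpr ⟨j₀, Set.mem_iUnion.mpr ⟨i,
            Set.mem_iUnion.mpr ⟨(fun hh => hi hh.symm), h⟩⟩⟩) hy
      have hmemj₀ : y ∈ powerCell x lam j₀ := fun i => hj₀.symm.trans_le (pmin_le x lam i y)
      have hLy : L y = -v j₀ := by
        rw [hLdef]
        simp only
        rw [Finset.sum_eq_single j₀]
        · have hymem : y ∈ powerCell x lam j₀ \ tie x lam := ⟨hmemj₀, hy⟩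
          exact Set.indicator_of_mem hymem _
        · intro i _ hi
          rw [Set.indicator_of_notMem]
          rintro ⟨hmem, -⟩
          exact absurd (hmem j₀) (not_le.mpr (hstrict i hi))
        · intro h; exact absurd (Finset.mem_univ j₀) h
      have hev : ∀ᶠ k in Filter.atTop, F k y = -v j₀ := by
        have hallev : ∀ᶠ k in Filter.atTop,
            ∀ i, pf x (lam + t k • v) j₀ y ≤ pf x (lam + t k • v) i y := by
          rw [Filter.eventually_all]
          intro i
          by_cases hi : i = j₀
          · subst hi; exact Filter.Eventually.of_forall fun k => le_rfl
          · have hgap : (0:ℝ) < pf x lam i y - pf x lam j₀ y :=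
              sub_pos.mpr (hstrict i hi)
            have hconv : Filter.Tendsto
                (fun k => pf x (lam + t k • v) i y - pf x (lam + t k • v) j₀ y)
                Filter.atTop (nhds (pf x lam i y - pf x lam j₀ y)) := by
              have heq : ∀ k, pf x (lam + t k • v) i y - pf x (lam + t k • v) j₀ y
                  = (pf x lam i y - pf x lam j₀ y) - t k * (v i - v j₀) := by
                intro k; simp only [pf, Pi.add_apply, Pi.smul_apply, smul_eq_mul]; ring
              simp only [heq]
              have h0 : Filter.Tendsto (fun k => t k * (v i - v j₀)) Filter.atTop
                  (nhds (0 * (v i - v j₀))) := ht_lim.mul_const _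
              rw [zero_mul] at h0
              simpa using tendsto_const_nhds.sub h0
            filter_upwards [hconv.eventually (eventually_gt_nhds hgap)] with k hk
            linarith [hk]
        filter_upwards [hallev] with k hk
        have h1 : pmin x (lam + t k • v) y = pf x (lam + t k • v) j₀ y :=
          pmin_eq_of_le x _ j₀ y hk
        have h2 : pf x (lam + t k • v) j₀ y = pf x lam j₀ y - t k * v j₀ := by
          simp only [pf, Pi.add_apply, Pi.smul_apply, smul_eq_mul]; ring
        rw [hFdef]
        simp only
        rw [h1, h2, ← hj₀]
        rw [div_eq_iff (ht_pos k).ne']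
        ring
      rw [hLy]
      exact Filter.Tendsto.congr' (Filter.EventuallyEq.symm hev) tendsto_const_nhds
    have htend := tendsto_integral_of_dominated_convergence (fun _ => ‖v‖) hFmeas
      (integrable_const ‖v‖) hFbound hae
    have hFle : ∀ k, (∫ y, F k y ∂μ) ≤ 0 := by
      intro k
      have hsum' : ∑ i, (lam + t k • v) i = 0 := by
        simp only [Pi.add_apply, Pi.smul_apply, smul_eq_mul, Finset.sum_add_distrib,
          ← Finset.mul_sum, hsum, hv]
        ring
      have hphile : Phi μ x (lam + t k • v) - Phi μ x lam ≤ 0 :=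
        sub_nonpos.mpr (hmax _ hsum')
      have heqF : (∫ y, F k y ∂μ) = (Phi μ x (lam + t k • v) - Phi μ x lam) / t k := by
        have hrw : F k = fun y => ((pmin x (lam + t k • v) y - pmin x 0 y)
            - (pmin x lam y - pmin x 0 y)) / t k := by
          funext y; rw [hFdef]; simp only; ring
        rw [hrw, integral_div, integral_sub (integrable_psi μ x _) (integrable_psi μ x lam)]
        rfl
      rw [heqF]
      exact div_nonpos_iff.mpr (Or.inr ⟨hphile, (ht_pos k).le⟩)
    have hlim : (∫ y, L y ∂μ) ≤ 0 :=
      le_of_tendsto htend (Filter.Eventually.of_forall hFle)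
    have hLint : (∫ y, L y ∂μ) = ∑ i, (-v i) * c i := by
      rw [hLdef]
      rw [integral_finset_sum _ fun i _ => (integrable_const (-v i)).indicator
        (((isClosed_powerCell x lam i).measurableSet).diff (measurableSet_tie x lam))]
      refine Finset.sum_congr rfl fun i _ => ?_
      rw [integral_indicator_const _
        (((isClosed_powerCell x lam i).measurableSet).diff (measurableSet_tie x lam))]
      rw [measureReal_def, measure_diff_null (tie_null μ hac x hx lam)]
      rw [smul_eq_mul, mul_comm]
    rw [hLint] at hlim
    have : ∑ i, (-v i) * c i = -∑ i, v i * c i := by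
      rw [← Finset.sum_neg_distrib]; congr 1; funext i; ring
    rw [this] at hlim
    linarith
  -- Step 2: all cell masses are equal
  have hceq : ∀ i i' : Fin n, c i = c i' := by
    have haux : ∀ i i' : Fin n, i ≠ i' → 0 ≤ c i - c i' := by
      intro i i' hii
      set v0 : Fin n → ℝ := fun k => (if k = i then (1:ℝ) else 0) - (if k = i' then 1 else 0)
        with hv0
      have hv : ∑ k, v0 k = 0 := by
        simp [hv0, Finset.sum_sub_distrib, Finset.sum_ite_eq']
      have := key _ hv
      have hsum2 : ∑ k, v0 k * c k = c i - c i' := by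
        simp only [hv0, sub_mul, ite_mul, one_mul, zero_mul]
        rw [Finset.sum_sub_distrib]
        congr 1 <;> simp [Finset.sum_ite_eq']
      rw [hsum2] at this
      exact this
    intro i i'
    rcases eq_or_ne i i' with h | h
    · rw [h]
    · linarith [haux i i' h, haux i' i (Ne.symm h)]
  -- Step 3: masses sum to one
  have hn : 0 < n := Fin.pos_iff_nonempty.mpr inferInstance
  have hsum1 : ∑ i, c i = 1 := by
    rw [hcdef]
    rw [← ENNReal.toReal_sum (fun i _ => measure_ne_top μ _)]
    rw [sum_measure_powerCell μ hac x hx lam hn]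
    simp
  have hcj : c j = ((n : ℝ))⁻¹ := by
    have : ∑ i, c i = (n : ℝ) * c j := by
      rw [Finset.sum_congr rfl fun i _ => hceq i j]
      simp [Finset.sum_const, nsmul_eq_mul]
    rw [hsum1] at this
    have hnne : (n : ℝ) ≠ 0 := Nat.cast_ne_zero.mpr hn.ne'
    field_simp
    linarith
  -- Step 4: conclude in `ℝ≥0∞`
  have hne_top : μ (powerCell x lam j) ≠ ⊤ := measure_ne_top μ _
  have : μ (powerCell x lam j) = ENNReal.ofReal ((n:ℝ)⁻¹) := by
    have hcj' : (μ (powerCell x lam j)).toReal = (n:ℝ)⁻¹ := hcj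
    rw [← ENNReal.ofReal_toReal hne_top, hcj']
  rw [this, ENNReal.ofReal_inv_of_pos (by exact_mod_cast hn), ENNReal.ofReal_natCast]

lemma uniqueness (μ : Measure E) [IsProbabilityMeasure μ] (hac : μ ≪ volume)
    (hpos : ∀ U : Set E, IsOpen U → U.Nonempty → 0 < μ U)
    (x : Fin n → E) (hx : Function.Injective x) (lam lam' : Fin n → ℝ)
    (hs : ∑ i, lam i = 0) (hs' : ∑ i, lam' i = 0)
    (hμ : ∀ j, μ (powerCell x lam j) = (n : ℝ≥0∞)⁻¹)
    (hμ' : ∀ j, μ (powerCell x lam' j) = (n : ℝ≥0∞)⁻¹) : lam = lam' := by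
  classical
  by_contra hne
  have hn : 0 < n := Fin.pos_iff_nonempty.mpr inferInstance
  set e : Fin n → ℝ := lam - lam' with hedef
  have hesum : ∑ i, e i = 0 := by
    simp only [hedef, Pi.sub_apply, Finset.sum_sub_distrib, hs, hs', sub_zero]
  have hene : e ≠ 0 := fun h => hne (sub_eq_zero.mp (by rw [← hedef]; exact h))
  set m := Finset.univ.sup' Finset.univ_nonempty e with hmdef
  have hm0 : 0 < m := by
    by_contra hm
    push_neg at hm
    obtain ⟨i₀, hi₀⟩ := Function.ne_iff.mp hene
    have hle : ∀ i : Fin n, e i ≤ 0 :=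
      fun i => (Finset.le_sup' e (Finset.mem_univ i)).trans hm
    have hlt : e i₀ < 0 := lt_of_le_of_ne (hle i₀) hi₀
    have : ∑ i, e i < 0 := by
      calc ∑ i, e i < ∑ _i : Fin n, (0:ℝ) :=
            Finset.sum_lt_sum (fun i _ => hle i) ⟨i₀, Finset.mem_univ i₀, hlt⟩
        _ = 0 := by simp
    linarith [hesum ▸ this]
  set S : Finset (Fin n) := Finset.univ.filter (fun j => e j = m) with hSdef
  have hSne : S.Nonempty := by
    obtain ⟨j, -, hj⟩ := Finset.exists_mem_eq_sup' Finset.univ_nonempty e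
    exact ⟨j, Finset.mem_filter.mpr ⟨Finset.mem_univ j, hj.symm⟩⟩
  set Sc : Finset (Fin n) := Finset.univ.filter (fun j => e j ≠ m) with hScdef
  have hScne : Sc.Nonempty := by
    by_contra hSc
    rw [Finset.not_nonempty_iff_eq_empty] at hSc
    have hall : ∀ j : Fin n, e j = m := by
      intro j
      by_contra hj
      exact absurd (hSc ▸ Finset.mem_filter.mpr ⟨Finset.mem_univ j, hj⟩) (Finset.notMem_empty j)
    have : ∑ i, e i = (n : ℝ) * m := by
      rw [Finset.sum_congr rfl fun i _ => hall i]
      simp [Finset.sum_const, nsmul_eq_mul]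
    rw [hesum] at this
    have : (n:ℝ) * m > 0 := by positivity
    linarith
  set δ := m - Sc.sup' hScne e with hδdef
  have hδ0 : 0 < δ := by
    rw [hδdef]
    have : Sc.sup' hScne e < m := by
      obtain ⟨i, hiSc, hi⟩ := Finset.exists_mem_eq_sup' hScne e
      have hile : e i ≤ m := Finset.le_sup' e (Finset.mem_univ i)
      have hine : e i ≠ m := (Finset.mem_filter.mp hiSc).2
      rw [hi]
      exact lt_of_le_of_ne hile hine
    linarith
  have heSc : ∀ i ∈ Sc, e i ≤ m - δ := fun i hi => by
    rw [hδdef]; simp only [sub_sub_cancel]; exact Finset.le_sup' e hi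
  have heS : ∀ j ∈ S, e j = m := fun j hj => (Finset.mem_filter.mp hj).2
  have hpfe : ∀ (i : Fin n) (y : E), pf x lam i y = pf x lam' i y - e i := by
    intro i y; simp only [pf, hedef, Pi.sub_apply]; ring
  set h : E → ℝ := fun y =>
    (S.inf' hSne fun j => pf x lam' j y) - (Sc.inf' hScne fun i => pf x lam' i y) with hhdef
  have hhcont : Continuous h := by
    exact (Continuous.finset_inf'_apply _ fun j _ => continuous_pf x lam' j).sub
      (Continuous.finset_inf'_apply _ fun j _ => continuous_pf x lam' j)
  -- (u1) points with h y < δ lie in ⋃_{j ∈ S} C_j(lam)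
  have hu1 : ∀ y : E, h y < δ → ∃ j ∈ S, y ∈ powerCell x lam j := by
    intro y hy
    obtain ⟨j, hjS, hj⟩ := Finset.exists_mem_eq_inf' hSne fun j => pf x lam' j y
    refine ⟨j, hjS, fun i => ?_⟩
    show pf x lam j y ≤ pf x lam i y
    have hj' : pf x lam j y = pf x lam' j y - m := by rw [hpfe, heS j hjS]
    by_cases hiS : i ∈ S
    · have h1 : pf x lam' j y ≤ pf x lam' i y := hj ▸ Finset.inf'_le _ hiS
      have h2 : pf x lam i y = pf x lam' i y - m := by rw [hpfe, heS i hiS]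
      rw [hj', h2]; linarith
    · have hiSc : i ∈ Sc := Finset.mem_filter.mpr ⟨Finset.mem_univ i,
        fun hcon => hiS (Finset.mem_filter.mpr ⟨Finset.mem_univ i, hcon⟩)⟩
      have h1 : Sc.inf' hScne (fun i' => pf x lam' i' y) ≤ pf x lam' i y :=
        Finset.inf'_le _ hiSc
      have h2 : pf x lam i y = pf x lam' i y - e i := hpfe i y
      have h3 : e i ≤ m - δ := heSc i hiSc
      have h4 : h y = pf x lam' j y - Sc.inf' hScne fun i' => pf x lam' i' y := by
        rw [hhdef]; simp only; rw [hj]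
      rw [hj', h2]
      have := hy
      rw [h4] at this
      linarith
  -- (u2) cells of lam' with index in S lie in {h ≤ 0}
  have hu2 : ∀ j ∈ S, ∀ y : E, y ∈ powerCell x lam' j → h y ≤ 0 := by
    intro j hjS y hy
    have h1 : (S.inf' hSne fun j' => pf x lam' j' y) ≤ pf x lam' j y := Finset.inf'_le _ hjS
    obtain ⟨i, hiSc, hi⟩ := Finset.exists_mem_eq_inf' hScne fun i => pf x lam' i y
    have h2 : pf x lam' j y ≤ pf x lam' i y := hy i
    rw [hhdef]; simp only; rw [hi]; linarith
  -- (u3) cells of lam' with index in Sc lie in {0 ≤ h}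
  have hu3 : ∀ i ∈ Sc, ∀ y : E, y ∈ powerCell x lam' i → 0 ≤ h y := by
    intro i hiSc y hy
    have h1 : (Sc.inf' hScne fun i' => pf x lam' i' y) ≤ pf x lam' i y := Finset.inf'_le _ hiSc
    obtain ⟨j, hjS, hj⟩ := Finset.exists_mem_eq_inf' hSne fun j => pf x lam' j y
    have h2 : pf x lam' i y ≤ pf x lam' j y := hy j
    rw [hhdef]; simp only; rw [hj]; linarith
  -- measures of the unions
  have hninv_ne : (n : ℝ≥0∞)⁻¹ ≠ 0 := by
    simp only [ne_eq, ENNReal.inv_eq_zero]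
    exact ENNReal.natCast_ne_top n
  have hA : μ (⋃ j ∈ S, powerCell x lam j) = S.card * (n : ℝ≥0∞)⁻¹ := by
    rw [measure_biUnion_powerCell μ hac x hx lam S]
    rw [Finset.sum_congr rfl fun j _ => hμ j]
    simp [Finset.sum_const]
  have hA' : μ (⋃ j ∈ S, powerCell x lam' j) = S.card * (n : ℝ≥0∞)⁻¹ := by
    rw [measure_biUnion_powerCell μ hac x hx lam' S]
    rw [Finset.sum_congr rfl fun j _ => hμ' j]
    simp [Finset.sum_const]
  set W := {y : E | 0 < h y ∧ h y < δ} with hWdef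
  have hWopen : IsOpen W := by
    have : W = h ⁻¹' (Set.Ioo 0 δ) := rfl
    rw [this]
    exact IsOpen.preimage hhcont isOpen_Ioo
  rcases Set.eq_empty_or_nonempty W with hWe | hWne
  · -- W empty
    have hdich : ∀ y : E, h y ≤ 0 ∨ δ ≤ h y := by
      intro y
      rcases le_or_gt (h y) 0 with h0 | h0
      · exact Or.inl h0
      · rcases le_or_gt δ (h y) with h1 | h1
        · exact Or.inr h1
        · exact absurd (⟨h0, h1⟩ : 0 < h y ∧ h y < δ)
            (Set.eq_empty_iff_forall_notMem.mp hWe y)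
    by_cases hyd : ∃ y₁ : E, δ ≤ h y₁
    · obtain ⟨y₁, hy₁⟩ := hyd
      set C1 := {y : E | h y ≤ 0} with hC1
      have hC1closed : IsClosed C1 := isClosed_le hhcont continuous_const
      have hC1open : IsOpen C1 := by
        have hcc : C1 = {y : E | δ ≤ h y}ᶜ := by
          ext y
          simp only [hC1, Set.mem_setOf_eq, Set.mem_compl_iff, not_le]
          constructor
          · intro hy; linarith
          · intro hy
            rcases hdich y with h0 | h0
            · exact h0
            · linarith
        rw [hcc]
        exact (isClosed_le continuous_const hhcont).isOpen_compl
      have hclopen : IsClopen C1 := ⟨hC1closed, hC1open⟩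
      have hA'pos : 0 < μ (⋃ j ∈ S, powerCell x lam' j) := by
        rw [hA']
        exact ENNReal.mul_pos (by exact_mod_cast hSne.card_pos.ne') hninv_ne
      obtain ⟨y₀, hy₀⟩ := nonempty_of_measure_ne_zero hA'pos.ne'
      have hy₀C1 : y₀ ∈ C1 := by
        rw [Set.mem_iUnion₂] at hy₀
        obtain ⟨j, hjS, hyj⟩ := hy₀
        exact hu2 j hjS y₀ hyj
      rcases isClopen_iff.mp hclopen with hemp | huniv
      · rw [hemp] at hy₀C1
        exact hy₀C1
      · have hy₁C1 : y₁ ∈ C1 := huniv ▸ Set.mem_univ y₁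
        have : h y₁ ≤ 0 := hy₁C1
        linarith
    · push_neg at hyd
      have hle : ∀ y, h y ≤ 0 := fun y =>
        (hdich y).resolve_right fun hge => absurd hge (not_le.mpr (hyd y))
      obtain ⟨i, hiSc⟩ := id hScne
      have hsub : powerCell x lam' i ⊆ tie x lam' := by
        intro y hy
        have h0 : h y = 0 := le_antisymm (hle y) (hu3 i hiSc y hy)
        obtain ⟨j, hjS, hj⟩ := Finset.exists_mem_eq_inf' hSne fun j => pf x lam' j y
        obtain ⟨i', hi'Sc, hi'⟩ := Finset.exists_mem_eq_inf' hScne fun i' => pf x lam' i' y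
        have hhy : h y = pf x lam' j y - pf x lam' i' y := by
          rw [hhdef]; simp only; rw [hj, hi']
        have heq : pf x lam' j y = pf x lam' i' y := by
          rw [h0] at hhy; linarith
        have hne' : j ≠ i' := fun hcon => (Finset.mem_filter.mp hi'Sc).2 (hcon ▸ heS j hjS)
        exact Set.mem_iUnion.mpr ⟨j, Set.mem_iUnion.mpr ⟨i', Set.mem_iUnion.mpr ⟨hne', heq⟩⟩⟩
      have hzero : μ (powerCell x lam' i) = 0 :=
        measure_mono_null hsub (tie_null μ hac x hx lam')
      rw [hμ' i] at hzero
      exact hninv_ne hzero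
  · -- W nonempty
    have hWpos : 0 < μ W := hpos W hWopen hWne
    have hsub1 : (⋃ j ∈ S, powerCell x lam' j) ⊆ ⋃ j ∈ S, powerCell x lam j := by
      intro y hy
      rw [Set.mem_iUnion₂] at hy
      obtain ⟨j, hjS, hyj⟩ := hy
      have := hu2 j hjS y hyj
      obtain ⟨j', hj'S, hyj'⟩ := hu1 y (lt_of_le_of_lt this hδ0)
      exact Set.mem_iUnion₂.mpr ⟨j', hj'S, hyj'⟩
    have hsub2 : W ⊆ ⋃ j ∈ S, powerCell x lam j := by
      intro y hy
      obtain ⟨j', hj'S, hyj'⟩ := hu1 y hy.2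
      exact Set.mem_iUnion₂.mpr ⟨j', hj'S, hyj'⟩
    have hdisj : Disjoint (⋃ j ∈ S, powerCell x lam' j) W := by
      rw [Set.disjoint_left]
      intro y hy hyW
      rw [Set.mem_iUnion₂] at hy
      obtain ⟨j, hjS, hyj⟩ := hy
      exact absurd hyW.1 (not_lt.mpr (hu2 j hjS y hyj))
    have hunion_le : μ ((⋃ j ∈ S, powerCell x lam' j) ∪ W) ≤ μ (⋃ j ∈ S, powerCell x lam j) :=
      measure_mono (Set.union_subset hsub1 hsub2)
    rw [measure_union hdisj hWopen.measurableSet, hA, hA'] at hunion_le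
    have hfin : (S.card : ℝ≥0∞) * (n : ℝ≥0∞)⁻¹ ≠ ⊤ := by
      refine ENNReal.mul_ne_top (ENNReal.natCast_ne_top _) ?_
      simp only [ne_eq, ENNReal.inv_eq_top]
      exact_mod_cast hn.ne'
    have := ENNReal.lt_add_right hfin hWpos.ne'
    exact absurd (lt_of_lt_of_le this hunion_le) (lt_irrefl _)

end AHA

/-- Aurenhammer–Hoffmann–Aronov: for an absolutely continuous probability
measure `μ` on `ℝ^d` positive on nonempty open sets and `n` distinct sites,
there is a unique choice of weights summing to zero whose power diagram
splits `μ` into `n` cells of measure `1/n` each. -/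
theorem exists_unique_equalizing_power_diagram (d n : ℕ) (hn : 0 < n)
    (μ : Measure (EuclideanSpace ℝ (Fin d))) [IsProbabilityMeasure μ]
    (hac : μ ≪ volume)
    (hpos : ∀ U : Set (EuclideanSpace ℝ (Fin d)), IsOpen U → U.Nonempty → 0 < μ U)
    (x : Fin n → EuclideanSpace ℝ (Fin d)) (hx : Function.Injective x) :
    ∃! lam : Fin n → ℝ, (∑ i, lam i = 0) ∧
      ∀ j, μ (powerCell x lam j) = (n : ENNReal)⁻¹ := by
  haveI : NeZero n := ⟨hn.ne'⟩
  have hex : ∃ lam : Fin n → ℝ, (∑ i, lam i = 0) ∧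
      ∀ j, μ (powerCell x lam j) = (n : ENNReal)⁻¹ := by
    rcases eq_or_lt_of_le (show 1 ≤ n from hn) with h1 | h2
    · -- the case `n = 1`
      subst h1
      refine ⟨0, by simp, fun j => ?_⟩
      have hcell : powerCell x 0 j = Set.univ := by
        ext y
        simp only [powerCell, Set.mem_setOf_eq, Set.mem_univ, iff_true]
        intro i
        rw [Subsingleton.elim i j]
      rw [hcell, measure_univ]
      simp
    · obtain ⟨lam, hsum, hmax⟩ := AHA.exists_maximizer μ x h2
      exact ⟨lam, hsum, AHA.measure_cells_eq_of_max μ hac x hx lam hsum hmax⟩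
  obtain ⟨lam, hlam⟩ := hex
  refine ⟨lam, hlam, fun lam' hlam' => ?_⟩
  exact AHA.uniqueness μ hac hpos x hx lam' lam hlam'.1 hlam.1 hlam'.2 hlam.2
end

section
/- Let n = ms with m, s ≥ 1, suppose that (i) for any absolutely continuous probability measure μ and any n-tuple of absolutely continuous probability measures on R^d there is a convex m-partition equalizing μ with each part assigned to exactly s of the n measures so that each assigned measure gives its part at least 1/m, and (ii) the proportional partition theorem holds for s measures. Then for any absolutely continuous probability measure μ and any n-tuple (μ_1,...,μ_n) of absolutely continuous probability measures on R^d there exists a convex partition (D_1, ..., D_n) of R^d and a permutation π of [n] with μ(D_k) = 1/n for all k and μ_i(D_{π(i)}) ≥ 1/n for all i. -/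
open MeasureTheory

/-- A convex partition of `ℝ^d` into `k` parts: closed convex sets covering
`ℝ^d` with pairwise disjoint interiors. -/
def IsConvexPartition {d k : ℕ} (C : Fin k → Set (EuclideanSpace ℝ (Fin d))) : Prop :=
  (∀ i, IsClosed (C i)) ∧ (∀ i, Convex ℝ (C i)) ∧ (⋃ i, C i = Set.univ) ∧
    Pairwise fun i j => Disjoint (interior (C i)) (interior (C j))

/-- The recursive subdivision step in the proof of the proportional convex
partition theorem: if `n = m * s`, (i) any `n` measures admit a coarse convex
`m`-partition equalizing a reference measure `μ` in which each part is
assigned to exactly `s` of the measures, each getting at least `1/m`, and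
(ii) the proportional partition theorem holds for `s` measures, then the
proportional partition theorem holds for `n` measures. -/
theorem proportional_partition_subdivision (d m s n : ℕ)
    (hm : 0 < m) (hs : 0 < s) (hn : n = m * s)
    (hcoarse : ∀ μ : Measure (EuclideanSpace ℝ (Fin d)),
      IsProbabilityMeasure μ → μ ≪ volume →
      ∀ ν : Fin n → Measure (EuclideanSpace ℝ (Fin d)),
      (∀ i, IsProbabilityMeasure (ν i)) → (∀ i, ν i ≪ volume) →
      ∃ C : Fin m → Set (EuclideanSpace ℝ (Fin d)), IsConvexPartition C ∧
        (∀ j, μ (C j) = (m : ENNReal)⁻¹) ∧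
        ∃ φ : Fin n → Fin m,
          (∀ j : Fin m, (Finset.univ.filter fun i => φ i = j).card = s) ∧
          (∀ i, (1 : ℝ) / m ≤ (ν i (C (φ i))).toReal))
    (hprop : ∀ μ : Measure (EuclideanSpace ℝ (Fin d)),
      IsProbabilityMeasure μ → μ ≪ volume →
      ∀ ν : Fin s → Measure (EuclideanSpace ℝ (Fin d)),
      (∀ i, IsProbabilityMeasure (ν i)) → (∀ i, ν i ≪ volume) →
      ∃ D : Fin s → Set (EuclideanSpace ℝ (Fin d)), IsConvexPartition D ∧
        (∀ k, μ (D k) = (s : ENNReal)⁻¹) ∧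
        ∃ π : Equiv.Perm (Fin s), ∀ i, (1 : ℝ) / s ≤ (ν i (D (π i))).toReal) :
    ∀ μ : Measure (EuclideanSpace ℝ (Fin d)),
      IsProbabilityMeasure μ → μ ≪ volume →
      ∀ ν : Fin n → Measure (EuclideanSpace ℝ (Fin d)),
      (∀ i, IsProbabilityMeasure (ν i)) → (∀ i, ν i ≪ volume) →
      ∃ D : Fin n → Set (EuclideanSpace ℝ (Fin d)), IsConvexPartition D ∧
        (∀ k, μ (D k) = (n : ENNReal)⁻¹) ∧
        ∃ π : Equiv.Perm (Fin n), ∀ i, (1 : ℝ) / n ≤ (ν i (D (π i))).toReal := by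
  intro μ hμ hμac ν hν hνac
  obtain ⟨C, hC, hCμ, φ, hφcard, hφν⟩ := hcoarse μ hμ hμac ν hν hνac
  have hm0 : (m : ENNReal) ≠ 0 := by exact_mod_cast hm.ne'
  have hs0 : (s : ENNReal) ≠ 0 := by exact_mod_cast hs.ne'
  have hmtop : (m : ENNReal) ≠ ⊤ := ENNReal.natCast_ne_top m
  have hCmeas : ∀ j, MeasurableSet (C j) := fun j => (hC.1 j).measurableSet
  -- fibers of the assignment map
  set fib : Fin m → Finset (Fin n) := fun j => Finset.univ.filter fun i => φ i = j with hfib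
  have σ : ∀ j, (fib j : Type) ≃ Fin s := fun j => Finset.equivFinOfCardEq (hφcard j)
  set idx : ∀ j : Fin m, Fin s → Fin n := fun j h => ((σ j).symm h : Fin n) with hidxdef
  have hidx : ∀ j h, φ (idx j h) = j := by
    intro j h
    have h2 : ((σ j).symm h : Fin n) ∈ Finset.univ.filter (fun i => φ i = j) :=
      ((σ j).symm h).2
    exact (Finset.mem_filter.mp h2).2
  -- positivity of the coarse masses
  have hνCpos : ∀ i, ν i (C (φ i)) ≠ 0 := by
    intro i h0
    have := hφν i
    rw [h0] at this
    simp at this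
    have : (0:ℝ) < 1/m := by positivity
    linarith [hφν i, ENNReal.toReal_eq_zero_iff (ν i (C (φ i)))]
  have hνCtop : ∀ i j, ν i (C j) ≠ ⊤ := fun i j => (measure_ne_top (ν i) _)
  -- the refined measures
  have key : ∀ j : Fin m, ∃ D : Fin s → Set (EuclideanSpace ℝ (Fin d)), IsConvexPartition D ∧
      (∀ k, ((m : ENNReal) • μ.restrict (C j)) (D k) = (s : ENNReal)⁻¹) ∧
      ∃ π : Equiv.Perm (Fin s), ∀ h : Fin s, (1 : ℝ) / s ≤
        (((ν (idx j h) (C j))⁻¹ • (ν (idx j h)).restrict (C j)) (D (π h))).toReal := by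
    intro j
    refine hprop _ ?_ ?_ (fun h => (ν (idx j h) (C j))⁻¹ • (ν (idx j h)).restrict (C j)) ?_ ?_
    · constructor
      rw [Measure.smul_apply, smul_eq_mul, Measure.restrict_apply_univ, hCμ j,
        ENNReal.mul_inv_cancel hm0 hmtop]
    · exact Measure.smul_absolutelyContinuous.trans
        ((Measure.absolutelyContinuous_of_le Measure.restrict_le_self).trans hμac)
    · intro h
      constructor
      rw [Measure.smul_apply, smul_eq_mul, Measure.restrict_apply_univ]
      have h0 : ν (idx j h) (C j) ≠ 0 := by
        have := hνCpos (idx j h); rwa [hidx j h] at this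
      exact ENNReal.inv_mul_cancel h0 (hνCtop _ _)
    · intro h
      exact Measure.smul_absolutelyContinuous.trans
        ((Measure.absolutelyContinuous_of_le Measure.restrict_le_self).trans (hνac _))
  choose D hDpart hDμ πs hπs using key
  -- index bookkeeping
  set e : Fin n ≃ Fin m × Fin s := (finCongr hn).trans finProdFinEquiv.symm with he
  have hmem : ∀ i : Fin n, i ∈ fib (φ i) := by
    intro i; simp [hfib]
  set π : Equiv.Perm (Fin n) :=
    (Equiv.sigmaFiberEquiv φ).symm.trans
      ((Equiv.sigmaCongrRight fun j =>
          ((Equiv.subtypeEquivRight (fun i => by simp [hfib])).trans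
            ((σ j).trans (πs j)))).trans
        ((Equiv.sigmaEquivProd (Fin m) (Fin s)).trans e.symm)) with hπdef
  have hπ : ∀ i : Fin n, π i = e.symm (φ i, πs (φ i) (σ (φ i) ⟨i, hmem i⟩)) := by
    intro i; rfl
  refine ⟨fun k => C (e k).1 ∩ D (e k).1 (e k).2, ⟨?_, ?_, ?_, ?_⟩, ?_, π, ?_⟩
  · exact fun k => (hC.1 _).inter ((hDpart _).1 _)
  · exact fun k => (hC.2.1 _).inter ((hDpart _).2.1 _)
  · apply Set.eq_univ_of_forall
    intro x
    have hx1 : x ∈ ⋃ j, C j := by rw [hC.2.2.1]; trivial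
    obtain ⟨j, hj⟩ := Set.mem_iUnion.mp hx1
    have hx2 : x ∈ ⋃ h, D j h := by rw [(hDpart j).2.2.1]; trivial
    obtain ⟨h, hh⟩ := Set.mem_iUnion.mp hx2
    refine Set.mem_iUnion.mpr ⟨e.symm (j, h), ?_⟩
    simp only [Equiv.apply_symm_apply]
    exact ⟨hj, hh⟩
  · intro k k' hkk'
    by_cases hj : (e k).1 = (e k').1
    · have hh : (e k).2 ≠ (e k').2 := by
        intro hh
        exact hkk' (e.injective (Prod.ext hj hh))
      have hd := (hDpart (e k).1).2.2.2 hh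
      refine hd.mono (interior_mono Set.inter_subset_right) ?_
      calc interior (C (e k').1 ∩ D (e k').1 (e k').2)
          ≤ interior (D (e k').1 (e k').2) := interior_mono Set.inter_subset_right
        _ = interior (D (e k).1 (e k').2) := by rw [hj]
    · exact (hC.2.2.2 hj).mono (interior_mono Set.inter_subset_left)
        (interior_mono Set.inter_subset_left)
  · intro k
    show μ (C (e k).1 ∩ D (e k).1 (e k).2) = (n : ENNReal)⁻¹
    have h1 := hDμ (e k).1 (e k).2
    rw [Measure.smul_apply, smul_eq_mul,
      Measure.restrict_apply ((hDpart (e k).1).1 (e k).2).measurableSet] at h1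
    have h2 : μ (D (e k).1 (e k).2 ∩ C (e k).1) = (m : ENNReal)⁻¹ * (s : ENNReal)⁻¹ := by
      rw [← h1, ← mul_assoc, ENNReal.inv_mul_cancel hm0 hmtop, one_mul]
    rw [Set.inter_comm, h2, hn]
    push_cast
    rw [ENNReal.mul_inv (Or.inl hm0) (Or.inl hmtop)]
  · intro i
    set j := φ i with hj
    set hcur : Fin s := σ j ⟨i, hmem i⟩ with hcurdef
    have hkey := hπs j hcur
    have hidxi : idx j hcur = i := by
      simp [hidxdef, hcurdef, Equiv.symm_apply_apply]
    rw [hidxi] at hkey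
    have heπ : e (π i) = (j, πs j hcur) := by
      rw [hπ i, Equiv.apply_symm_apply]
    rw [Measure.smul_apply, smul_eq_mul,
      Measure.restrict_apply ((hDpart j).1 _).measurableSet] at hkey
    set a := ν i (C j) with ha
    set b := ν i (D j (πs j hcur) ∩ C j) with hb
    have hatop : a ≠ ⊤ := hνCtop i j
    have hbtop : b ≠ ⊤ := measure_ne_top _ _
    rw [ENNReal.toReal_mul, ENNReal.toReal_inv] at hkey
    have hale : (1:ℝ)/m ≤ a.toReal := hφν i
    have hapos : (0:ℝ) < a.toReal := lt_of_lt_of_le (by positivity) hale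
    have hstep : a.toReal * ((1:ℝ)/s) ≤ b.toReal := by
      have := mul_le_mul_of_nonneg_left hkey hapos.le
      rwa [← mul_assoc, mul_inv_cancel₀ hapos.ne', one_mul] at this
    have hgoal : ((ν i) (C j ∩ D j (πs j hcur))).toReal = b.toReal := by
      rw [hb, Set.inter_comm]
    have hset : C (e (π i)).1 ∩ D (e (π i)).1 (e (π i)).2 = C j ∩ D j (πs j hcur) := by
      rw [heπ]
    show (1:ℝ)/n ≤ ((ν i) (C (e (π i)).1 ∩ D (e (π i)).1 (e (π i)).2)).toReal
    rw [hset, hgoal]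
    calc (1:ℝ)/n = (1/m) * (1/s) := by
          rw [hn]; push_cast; rw [div_mul_div_comm, one_mul]
      _ ≤ a.toReal * (1/s) := by
          apply mul_le_mul_of_nonneg_right hale; positivity
      _ ≤ b.toReal := hstep
end
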